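/- arXiv:2202.08123 — 7 statements merged into one kernel-verified Lean document; each statement's English description precedes it below -/
import Mathlib

section
/- Let s > 0 and 0 < t ≤ 1/2 be real numbers and let G = (V, E) be a finite simple graph with V nonempty such that ‖V‖ ≥ (s + t + 1)·|V|. Then there exists a partition (A, B) of V with both A and B nonempty such that ‖A‖ ≥ s·|A| and ‖B‖ ≥ t·|B|. -/
open Finset

/-- `G.edgesIn X` is the number of edges of the induced subgraph `G[X]`. -/
noncomputable def SimpleGraph.edgesIn {V : Type*} (G : SimpleGraph V) (X : Finset V) : ℕ :=
  {e ∈ G.edgeSet | ∀ v ∈ e, v ∈ X}.ncard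

set_option maxHeartbeats 1000000 in
/-- If `s > 0`, `0 < t ≤ 1/2` and `‖V‖ ≥ (s+t+1)|V|`, then `V` has a partition into
nonempty parts `A`, `B` with `‖A‖ ≥ s|A|` and `‖B‖ ≥ t|B|`. -/
theorem avg_degree_partition_small_t {V : Type*} [Fintype V] [Nonempty V] [DecidableEq V]
    (G : SimpleGraph V) (s t : ℝ) (hs : 0 < s) (ht0 : 0 < t) (ht1 : t ≤ 1 / 2)
    (h : (s + t + 1) * (Fintype.card V : ℝ) ≤ (G.edgesIn Finset.univ : ℝ)) :
    ∃ A B : Finset V, A.Nonempty ∧ B.Nonempty ∧ Disjoint A B ∧ A ∪ B = Finset.univ ∧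
      s * (A.card : ℝ) ≤ (G.edgesIn A : ℝ) ∧ t * (B.card : ℝ) ≤ (G.edgesIn B : ℝ) := by
  classical
  set n := Fintype.card V with hn
  set m := G.edgeFinset.card with hm
  have hEfin : ∀ X : Finset V, G.edgesIn X
      = (G.edgeFinset.filter (fun e => ∀ x ∈ e, x ∈ X)).card := by
    intro X
    rw [SimpleGraph.edgesIn, ← Set.ncard_coe_finset]
    congr 1
    ext e
    simp [SimpleGraph.mem_edgeFinset]
  have hUniv : G.edgesIn Finset.univ = m := by
    rw [hEfin]
    simp [hm]
  rw [hUniv] at h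
  have hn1 : (1 : ℝ) ≤ n := by
    exact_mod_cast Fintype.card_pos
  have hm1 : 0 < m := by
    have : (0:ℝ) < m := lt_of_lt_of_le (by nlinarith) h
    exact_mod_cast this
  -- n ≥ 4
  have h2m : 2 * m ≤ n * (n - 1) := by
    have h1 : m ≤ n.choose 2 := SimpleGraph.card_edgeFinset_le_card_choose_two
    have h2 : n.choose 2 * 2 ≤ n * (n-1) := by
      rw [Nat.choose_two_right]
      exact Nat.div_mul_le_self _ _
    omega
  have hnm : n < m := by
    have : (n:ℝ) < m := by nlinarith
    exact_mod_cast this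
  have hn0 : 1 ≤ n := by exact_mod_cast hn1
  have hn4 : 4 ≤ n := by
    by_contra hc
    push_neg at hc
    interval_cases n <;> omega
  -- pick an adjacent pair
  obtain ⟨u, w, huw⟩ : ∃ u w, G.Adj u w := by
    obtain ⟨e, he⟩ := Finset.card_pos.mp hm1
    induction e using Sym2.ind with
    | _ x y => exact ⟨x, y, SimpleGraph.mem_edgeFinset.mp he⟩
  obtain ⟨v, hvN, hvmin⟩ := Finset.exists_min_image (G.neighborFinset u) (fun x => G.degree x)
    ⟨w, (SimpleGraph.mem_neighborFinset _ _ _).mpr huw⟩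
  have hadj : G.Adj u v := (SimpleGraph.mem_neighborFinset _ _ _).mp hvN
  have hune : u ≠ v := G.ne_of_adj hadj
  -- degree facts
  have hd1 : G.degree u * G.degree v ≤ ∑ x ∈ G.neighborFinset u, G.degree x := by
    have := Finset.card_nsmul_le_sum (G.neighborFinset u) (fun x => G.degree x) (G.degree v)
      (fun x hx => hvmin x hx)
    simpa [SimpleGraph.card_neighborFinset_eq_degree, smul_eq_mul] using this
  have hd2 : (∑ x ∈ G.neighborFinset u, G.degree x) + G.degree u ≤ 2 * m := by
    have hu : u ∉ G.neighborFinset u := by simp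
    have hins : ∑ x ∈ insert u (G.neighborFinset u), G.degree x
        = (∑ x ∈ G.neighborFinset u, G.degree x) + G.degree u := by
      rw [Finset.sum_insert hu]; ring
    calc (∑ x ∈ G.neighborFinset u, G.degree x) + G.degree u
        = ∑ x ∈ insert u (G.neighborFinset u), G.degree x := hins.symm
      _ ≤ ∑ x : V, G.degree x :=
          Finset.sum_le_sum_of_subset (Finset.subset_univ _)
      _ = 2 * m := G.sum_degrees_eq_twice_card_edges
  have hdu1 : 1 ≤ G.degree u := by
    have : v ∈ G.neighborFinset u := hvN
    have : 0 < (G.neighborFinset u).card := Finset.card_pos.mpr ⟨v, hvN⟩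
    rw [SimpleGraph.card_neighborFinset_eq_degree] at this; exact this
  have hdun : G.degree u < n := G.degree_lt_card_verts u
  have hdvn : G.degree v < n := G.degree_lt_card_verts v
  -- key claim : n * (deg u + deg v) ≤ 2 m + n (n-1), over ℝ
  have hdd : (G.degree u : ℝ) * G.degree v + G.degree u ≤ 2 * m := by
    have : G.degree u * G.degree v + G.degree u ≤ 2 * m := le_trans (by omega) hd2
    exact_mod_cast this
  have hC : (n:ℝ) * (G.degree u + G.degree v) ≤ 2 * m + n * (n - 1) := by
    have hdu1' : (1:ℝ) ≤ (G.degree u : ℝ) := by exact_mod_cast hdu1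
    have hdun' : (G.degree u : ℝ) ≤ (n:ℝ) - 1 := by
      have : ((G.degree u : ℝ)) + 1 ≤ n := by exact_mod_cast hdun
      linarith
    have hdvn' : (G.degree v : ℝ) ≤ (n:ℝ) - 1 := by
      have : ((G.degree v : ℝ)) + 1 ≤ n := by exact_mod_cast hdvn
      linarith
    rcases le_or_gt ((n:ℝ) * (G.degree u : ℝ)) (2 * m) with hcase | hcase
    · nlinarith
    · nlinarith [mul_nonneg (by linarith : (0:ℝ) ≤ (n:ℝ) - (G.degree u : ℝ))
        (by linarith : (0:ℝ) ≤ (n:ℝ) * (G.degree u : ℝ) - 2 * m),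
        mul_le_mul_of_nonneg_left hdd (by linarith : (0:ℝ) ≤ (n:ℝ))]
  have hBcard : ({u, v} : Finset V).card = 2 := by
    rw [Finset.card_insert_of_notMem (by simp [hune]), Finset.card_singleton]
  have hAcard : (Finset.univ \ ({u, v} : Finset V)).card = n - 2 := by
    rw [Finset.card_sdiff_of_subset (Finset.subset_univ _), Finset.card_univ, hBcard]
  -- edges inside {u,v}
  have hboth : G.edgeFinset.filter (fun e => u ∈ e ∧ v ∈ e) = {s(u, v)} := by
    ext e
    induction e using Sym2.ind with
    | _ x y =>
      simp only [Finset.mem_filter, SimpleGraph.mem_edgeFinset, SimpleGraph.mem_edgeSet,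
        Sym2.mem_iff, Finset.mem_singleton, Sym2.eq_iff]
      constructor
      · rintro ⟨hxy, hu | hu, hv | hv⟩ <;> subst hu <;> subst hv <;>
          first
          | exact absurd rfl hune
          | tauto
      · rintro (⟨rfl, rfl⟩ | ⟨rfl, rfl⟩)
        · exact ⟨hadj, Or.inl rfl, Or.inr rfl⟩
        · exact ⟨hadj.symm, Or.inr rfl, Or.inl rfl⟩
  have hBedges : G.edgesIn {u, v} = 1 := by
    rw [hEfin]
    have heq : G.edgeFinset.filter (fun e => ∀ x ∈ e, x ∈ ({u, v} : Finset V))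
        = G.edgeFinset.filter (fun e => u ∈ e ∧ v ∈ e) := by
      apply Finset.filter_congr
      intro e he
      rw [SimpleGraph.mem_edgeFinset] at he
      induction e using Sym2.ind with
      | _ x y =>
        rw [SimpleGraph.mem_edgeSet] at he
        have hxy : x ≠ y := he.ne
        simp only [Sym2.mem_iff, Finset.mem_insert, Finset.mem_singleton]
        constructor
        · intro hall
          have hx := hall x (Or.inl rfl)
          have hy := hall y (Or.inr rfl)
          rcases hx with rfl | rfl <;> rcases hy with rfl | rfl <;> tauto
        · rintro ⟨hu | hu, hv | hv⟩ <;> subst hu <;> subst hv <;>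
            first
            | exact absurd rfl hune
            | exact absurd rfl hxy
            | (intro z hz; rcases hz with rfl | rfl <;> tauto)
    rw [heq, hboth, Finset.card_singleton]
  -- incidence counts
  have hinc : ∀ a : V, (G.edgeFinset.filter (fun e => a ∈ e)).card = G.degree a := by
    intro a
    rw [← SimpleGraph.card_incidenceFinset_eq_degree]
    congr 1
    ext e
    simp [SimpleGraph.mem_incidenceFinset, SimpleGraph.incidenceSet,
      SimpleGraph.mem_edgeFinset]
  have hUI : (G.edgeFinset.filter (fun e => u ∈ e ∨ v ∈ e)).card + 1
      = G.degree u + G.degree v := by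
    have := Finset.card_union_add_card_inter (G.edgeFinset.filter (fun e => u ∈ e))
      (G.edgeFinset.filter (fun e => v ∈ e))
    rw [← Finset.filter_or, ← Finset.filter_and, hboth, hinc, hinc,
      Finset.card_singleton] at this
    exact this
  -- edges inside the complement
  have hsplit : (G.edgeFinset.filter (fun e => ∀ x ∈ e, x ∈ (Finset.univ \ ({u, v} : Finset V)))).card
      + (G.edgeFinset.filter (fun e => u ∈ e ∨ v ∈ e)).card = m := by
    have heq : G.edgeFinset.filter (fun e => ∀ x ∈ e, x ∈ (Finset.univ \ ({u, v} : Finset V)))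
        = G.edgeFinset.filter (fun e => ¬ (u ∈ e ∨ v ∈ e)) := by
      apply Finset.filter_congr
      intro e _
      constructor
      · intro hall hcon
        rcases hcon with hue | hve
        · have := hall u hue
          simp at this
        · have := hall v hve
          simp at this
      · intro hno x hx
        simp only [Finset.mem_sdiff, Finset.mem_univ, true_and, Finset.mem_insert,
          Finset.mem_singleton]
        push_neg
        constructor
        · rintro rfl; exact hno (Or.inl hx)
        · rintro rfl; exact hno (Or.inr hx)
    rw [heq, add_comm]
    exact Finset.card_filter_add_card_filter_not _
  have hAedges : (G.edgesIn (Finset.univ \ ({u, v} : Finset V)) : ℝ)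
      = (m : ℝ) - ((G.degree u : ℝ) + (G.degree v : ℝ)) + 1 := by
    have e3 : G.edgesIn (Finset.univ \ ({u, v} : Finset V)) + (G.degree u + G.degree v)
        = m + 1 := by
      rw [hEfin]
      omega
    have e4 : (G.edgesIn (Finset.univ \ ({u, v} : Finset V)) : ℝ)
        + ((G.degree u : ℝ) + (G.degree v : ℝ)) = (m : ℝ) + 1 := by
      exact_mod_cast e3
    linarith
  -- the partition
  refine ⟨Finset.univ \ {u, v}, {u, v}, ?_, ?_, ?_, ?_, ?_, ?_⟩
  · refine Finset.card_pos.mp ?_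
    rw [hAcard]
    omega
  · exact ⟨u, by simp⟩
  · exact Finset.sdiff_disjoint
  · simp [Finset.sdiff_union_of_subset (Finset.subset_univ _)]
  · rw [hAcard]
    have hcast : ((n - 2 : ℕ) : ℝ) = (n : ℝ) - 2 := by
      have : (2 : ℕ) ≤ n := by omega
      push_cast [this]
      ring
    rw [hcast, hAedges]
    have hnR : (4 : ℝ) ≤ (n : ℝ) := by exact_mod_cast hn4
    nlinarith [hC, mul_le_mul_of_nonneg_right h (show (0:ℝ) ≤ (n:ℝ) - 2 by linarith),
      mul_nonneg (mul_nonneg ht0.le (show (0:ℝ) ≤ (n:ℝ) by linarith))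
        (show (0:ℝ) ≤ (n:ℝ) - 2 by linarith)]
  · rw [hBedges, hBcard]
    push_cast
    linarith
end

section
/- Let s, t > 0 be real numbers and let G = (V, E) be a finite simple graph with ‖V‖ ≥ (s + t + 1)·|V|. Suppose A, B ⊆ V are disjoint nonempty sets with ‖A‖ ≥ s·|A|, ‖B‖ ≥ t·|B|, and (‖A‖ − s·|A|) + (‖B‖ − t·|B|) ≥ T(A ∪ B) − 1. Then there exists a partition (A′, B′) of V with both A′ and B′ nonempty such that ‖A′‖ ≥ s·|A′| and ‖B′‖ ≥ t·|B′|. -/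
open Finset

private lemma ncard_ineq_aux {α : Type*} (SA SB SV U V2 W : Set α)
    (hU : U.Finite) (hV : V2.Finite) (hW : W.Finite)
    (hSA : SA.Finite) (hSB : SB.Finite)
    (f1 : SA ∪ SB ⊆ (U ∪ V2) ∩ W) (f2 : Disjoint SA SB) (f3 : SV ⊆ (U ∪ V2) ∪ W) :
    SA.ncard + SB.ncard + SV.ncard ≤ U.ncard + V2.ncard + W.ncard := by
  have h1 : SV.ncard ≤ ((U ∪ V2) ∪ W).ncard :=
    Set.ncard_le_ncard f3 ((hU.union hV).union hW)
  have h2 := Set.ncard_union_add_ncard_inter (U ∪ V2) W (hU.union hV) hW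
  have h3 : SA.ncard + SB.ncard ≤ ((U ∪ V2) ∩ W).ncard := by
    rw [← Set.ncard_union_eq f2 hSA hSB]
    exact Set.ncard_le_ncard f1 ((hU.union hV).inter_of_left W)
  have h4 : (U ∪ V2).ncard ≤ U.ncard + V2.ncard := Set.ncard_union_le U V2
  omega

private lemma edgesIn_key {V : Type*} [Fintype V] [DecidableEq V]
    (G : SimpleGraph V) (A B : Finset V) (hAB : Disjoint A B) :
    G.edgesIn A + G.edgesIn B + G.edgesIn Finset.univ ≤
      G.edgesIn Bᶜ + G.edgesIn Aᶜ + G.edgesIn (A ∪ B) := by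
  classical
  simp only [SimpleGraph.edgesIn]
  apply ncard_ineq_aux _ _ _ _ _ _ (Set.toFinite _) (Set.toFinite _) (Set.toFinite _)
    (Set.toFinite _) (Set.toFinite _)
  · -- f1
    rintro e (⟨he, hv⟩ | ⟨he, hv⟩)
    · exact ⟨Or.inl ⟨he, fun v hvv => Finset.mem_compl.mpr
        (fun hvB => Finset.disjoint_left.mp hAB (hv v hvv) hvB)⟩,
        ⟨he, fun v hvv => Finset.mem_union_left _ (hv v hvv)⟩⟩
    · exact ⟨Or.inr ⟨he, fun v hvv => Finset.mem_compl.mpr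
        (fun hvA => Finset.disjoint_left.mp hAB hvA (hv v hvv))⟩,
        ⟨he, fun v hvv => Finset.mem_union_right _ (hv v hvv)⟩⟩
  · -- f2
    rw [Set.disjoint_left]
    rintro e ⟨he, hvA⟩ ⟨-, hvB⟩
    have hx := Sym2.out_fst_mem e
    exact Finset.disjoint_left.mp hAB (hvA _ hx) (hvB _ hx)
  · -- f3
    intro e
    induction e using Sym2.ind with
    | _ x y =>
      rintro ⟨he, -⟩
      by_cases hx : x ∈ A ∪ B <;> by_cases hy : y ∈ A ∪ B
      · exact Or.inr ⟨he, fun v hv => by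
          rcases Sym2.mem_iff.mp hv with rfl | rfl
          exacts [hx, hy]⟩
      · rcases Finset.mem_union.mp hx with hxA | hxB
        · have hyB : y ∉ B := fun h => hy (Finset.mem_union_right _ h)
          have hxB : x ∉ B := Finset.disjoint_left.mp hAB hxA
          exact Or.inl (Or.inl ⟨he, fun v hv => Finset.mem_compl.mpr (by
            rcases Sym2.mem_iff.mp hv with rfl | rfl
            exacts [hxB, hyB])⟩)
        · have hyA : y ∉ A := fun h => hy (Finset.mem_union_left _ h)
          have hxA : x ∉ A := fun h => Finset.disjoint_left.mp hAB h hxB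
          exact Or.inl (Or.inr ⟨he, fun v hv => Finset.mem_compl.mpr (by
            rcases Sym2.mem_iff.mp hv with rfl | rfl
            exacts [hxA, hyA])⟩)
      · rcases Finset.mem_union.mp hy with hyA | hyB
        · have hxB : x ∉ B := fun h => hx (Finset.mem_union_right _ h)
          have hyB : y ∉ B := Finset.disjoint_left.mp hAB hyA
          exact Or.inl (Or.inl ⟨he, fun v hv => Finset.mem_compl.mpr (by
            rcases Sym2.mem_iff.mp hv with rfl | rfl
            exacts [hxB, hyB])⟩)
        · have hxA : x ∉ A := fun h => hx (Finset.mem_union_left _ h)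
          have hyA : y ∉ A := fun h => Finset.disjoint_left.mp hAB h hyB
          exact Or.inl (Or.inr ⟨he, fun v hv => Finset.mem_compl.mpr (by
            rcases Sym2.mem_iff.mp hv with rfl | rfl
            exacts [hxA, hyA])⟩)
      · have hxB : x ∉ B := fun h => hx (Finset.mem_union_right _ h)
        have hyB : y ∉ B := fun h => hy (Finset.mem_union_right _ h)
        exact Or.inl (Or.inl ⟨he, fun v hv => Finset.mem_compl.mpr (by
          rcases Sym2.mem_iff.mp hv with rfl | rfl
          exacts [hxB, hyB])⟩)

/-- Given `‖V‖ ≥ (s+t+1)|V|` and disjoint nonempty sets `A`, `B` with `‖A‖ ≥ s|A|`,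
`‖B‖ ≥ t|B|` and `(‖A‖ - s|A|) + (‖B‖ - t|B|) ≥ T(A ∪ B) - 1`
(where `T(X) = max {0, ‖X‖ - (s+t+1)|X|}`), there is a partition `(A', B')` of `V`
into nonempty parts with `‖A'‖ ≥ s|A'|` and `‖B'‖ ≥ t|B'|`. -/
theorem partition_of_strong_pair {V : Type*} [Fintype V] [DecidableEq V]
    (G : SimpleGraph V) (s t : ℝ) (hs : 0 < s) (ht : 0 < t)
    (hG : (s + t + 1) * (Fintype.card V : ℝ) ≤ (G.edgesIn Finset.univ : ℝ))
    (A B : Finset V) (hA : A.Nonempty) (hB : B.Nonempty) (hAB : Disjoint A B)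
    (h1 : s * (A.card : ℝ) ≤ (G.edgesIn A : ℝ))
    (h2 : t * (B.card : ℝ) ≤ (G.edgesIn B : ℝ))
    (h3 : max 0 ((G.edgesIn (A ∪ B) : ℝ) - (s + t + 1) * (A ∪ B).card) - 1 ≤
      ((G.edgesIn A : ℝ) - s * A.card) + ((G.edgesIn B : ℝ) - t * B.card)) :
    ∃ A' B' : Finset V, A'.Nonempty ∧ B'.Nonempty ∧ Disjoint A' B' ∧ A' ∪ B' = Finset.univ ∧
      s * (A'.card : ℝ) ≤ (G.edgesIn A' : ℝ) ∧ t * (B'.card : ℝ) ≤ (G.edgesIn B' : ℝ) := by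
  classical
  by_cases hcov : A ∪ B = Finset.univ
  · exact ⟨A, B, hA, hB, hAB, hcov, h1, h2⟩
  -- not covering: at least one extra vertex
  have hsub : A ∪ B ⊂ Finset.univ := (Finset.subset_univ _).ssubset_of_ne hcov
  have hcard : (A ∪ B).card + 1 ≤ Fintype.card V := by
    have := Finset.card_lt_card hsub
    rwa [Finset.card_univ, Nat.lt_iff_add_one_le] at this
  have hBcNe : Bᶜ.Nonempty := by
    obtain ⟨a, ha⟩ := hA
    exact ⟨a, Finset.mem_compl.mpr (Finset.disjoint_left.mp hAB ha)⟩
  have hAcNe : Aᶜ.Nonempty := by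
    obtain ⟨b, hb⟩ := hB
    exact ⟨b, Finset.mem_compl.mpr (fun h => Finset.disjoint_left.mp hAB h hb)⟩
  have hXc : ((A ∪ B).card : ℝ) = (A.card : ℝ) + B.card := by
    rw [Finset.card_union_of_disjoint hAB]; push_cast; ring
  have hBcC : ((Bᶜ).card : ℝ) = (Fintype.card V : ℝ) - B.card := by
    rw [Finset.card_compl, Nat.cast_sub (by simpa using Finset.card_le_univ B)]
  have hAcC : ((Aᶜ).card : ℝ) = (Fintype.card V : ℝ) - A.card := by
    rw [Finset.card_compl, Nat.cast_sub (by simpa using Finset.card_le_univ A)]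
  have hkeyR : (G.edgesIn A : ℝ) + G.edgesIn B + G.edgesIn Finset.univ ≤
      G.edgesIn Bᶜ + G.edgesIn Aᶜ + G.edgesIn (A ∪ B) := by
    exact_mod_cast edgesIn_key G A B hAB
  have h3' : (G.edgesIn (A ∪ B) : ℝ) ≤ (s + t + 1) * ((A.card : ℝ) + B.card) +
      ((G.edgesIn A : ℝ) - s * A.card) + ((G.edgesIn B : ℝ) - t * B.card) + 1 := by
    have h3c := h3
    rw [hXc] at h3c
    have hm := le_max_right (0 : ℝ) ((G.edgesIn (A ∪ B) : ℝ) - (s + t + 1) * ((A.card : ℝ) + B.card))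
    linarith
  have hcardR : ((A.card : ℝ) + B.card) + 1 ≤ (Fintype.card V : ℝ) := by
    rw [← hXc]; exact_mod_cast hcard
  by_cases hfin : s * ((Bᶜ).card : ℝ) ≤ (G.edgesIn Bᶜ : ℝ)
  · refine ⟨Bᶜ, B, hBcNe, hB, disjoint_compl_left, ?_, hfin, h2⟩
    ext v; by_cases h : v ∈ B <;> simp [h]
  · refine ⟨A, Aᶜ, hA, hAcNe, disjoint_compl_right, ?_, h1, ?_⟩
    · ext v; by_cases h : v ∈ A <;> simp [h]
    · by_contra hNo
      push_neg at hfin hNo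
      rw [hBcC] at hfin
      rw [hAcC] at hNo
      linarith
end

section
/- Let s, t > 0 be real numbers and let G = (V, E) be a finite simple graph with |V| ≥ 2 such that ‖V‖ ≥ (s + t + 1)·|V| and such that every nonempty proper subset X ⊊ V satisfies ‖X‖ < (s + t + 1)·|X|. Let T := ‖V‖ − (s + t + 1)·|V|. Then every vertex v of G has degree d(v) > s + t + 1 + T, and consequently |V| > s + t + 2 + T. -/
open Finset

lemma edgesIn_erase {V : Type*} [Fintype V] [DecidableEq V] (G : SimpleGraph V)
    [DecidableRel G.Adj] (v : V) :
    G.edgesIn Finset.univ = G.edgesIn (Finset.univ.erase v) + G.degree v := by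
  unfold SimpleGraph.edgesIn
  have h1 : {e ∈ G.edgeSet | ∀ w ∈ e, w ∈ (Finset.univ : Finset V)} = G.edgeSet := by
    ext e; simp
  have h2 : {e ∈ G.edgeSet | ∀ w ∈ e, w ∈ (Finset.univ.erase v)} =
      {e ∈ G.edgeSet | v ∉ e} := by
    ext e
    simp only [Set.mem_setOf_eq, Finset.mem_erase, Finset.mem_univ, and_true]
    constructor
    · rintro ⟨he, h⟩; exact ⟨he, fun hv => h v hv rfl⟩
    · rintro ⟨he, h⟩; exact ⟨he, fun w hw hwv => h (hwv ▸ hw)⟩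
  have h3 : (G.incidenceSet v).ncard = G.degree v := by
    rw [← Nat.card_coe_set_eq, Nat.card_eq_fintype_card, G.card_incidenceSet_eq_degree]
  have h4 : G.edgeSet = {e ∈ G.edgeSet | v ∉ e} ∪ G.incidenceSet v := by
    ext e
    simp only [Set.mem_union, Set.mem_setOf_eq, SimpleGraph.incidenceSet]
    by_cases hv : v ∈ e <;> constructor <;> intro he
    · exact Or.inr ⟨he, hv⟩
    · rcases he with ⟨he, _⟩ | ⟨he, _⟩ <;> exact he
    · exact Or.inl ⟨he, hv⟩
    · rcases he with ⟨he, _⟩ | ⟨he, _⟩ <;> exact he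
  rw [h1, h2, ← h3]
  have hd : Disjoint {e ∈ G.edgeSet | v ∉ e} (G.incidenceSet v) :=
    Set.disjoint_left.2 fun e he hi => he.2 hi.2
  have h5 := Set.ncard_union_eq hd (Set.toFinite _) (Set.toFinite _)
  rw [← h4] at h5
  exact h5

/-- If `‖V‖ ≥ (s+t+1)|V|` but every nonempty proper subset `X` satisfies
`‖X‖ < (s+t+1)|X|`, then, with `T = ‖V‖ - (s+t+1)|V|`, every vertex has degree
`> s + t + 1 + T`, and consequently `|V| > s + t + 2 + T`. -/
theorem min_counterexample_degree {V : Type*} [Fintype V] [DecidableEq V]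
    (G : SimpleGraph V) [DecidableRel G.Adj] (s t : ℝ) (hs : 0 < s) (ht : 0 < t)
    (hcard : 2 ≤ Fintype.card V)
    (h : (s + t + 1) * (Fintype.card V : ℝ) ≤ (G.edgesIn Finset.univ : ℝ))
    (hmin : ∀ X : Finset V, X.Nonempty → X ≠ Finset.univ →
      (G.edgesIn X : ℝ) < (s + t + 1) * X.card) :
    (∀ v : V, s + t + 1 + ((G.edgesIn Finset.univ : ℝ) - (s + t + 1) * Fintype.card V) <
      (G.degree v : ℝ)) ∧
    s + t + 2 + ((G.edgesIn Finset.univ : ℝ) - (s + t + 1) * Fintype.card V) <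
      (Fintype.card V : ℝ) := by
  have hdeg : ∀ v : V, s + t + 1 + ((G.edgesIn Finset.univ : ℝ) -
      (s + t + 1) * Fintype.card V) < (G.degree v : ℝ) := by
    intro v
    set X := Finset.univ.erase v with hX
    have hXcard : X.card = Fintype.card V - 1 := by
      simp [hX, Finset.card_erase_of_mem, Finset.card_univ]
    have hXne : X.Nonempty := by
      rw [← Finset.card_pos, hXcard]; omega
    have hXneq : X ≠ Finset.univ := by
      intro hc
      have : v ∈ X := hc ▸ Finset.mem_univ v
      simp [hX] at this
    have hm := hmin X hXne hXneq
    have hsplit := edgesIn_erase G v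
    have hXcardR : (X.card : ℝ) = (Fintype.card V : ℝ) - 1 := by
      rw [hXcard]; push_cast [Nat.cast_sub (by omega : 1 ≤ Fintype.card V)]; ring
    have hsplitR : (G.edgesIn Finset.univ : ℝ) = (G.edgesIn X : ℝ) + (G.degree v : ℝ) := by
      exact_mod_cast congrArg (Nat.cast : ℕ → ℝ) hsplit
    rw [hXcardR] at hm
    nlinarith [hm, hsplitR]
  refine ⟨hdeg, ?_⟩
  have : (0 : ℕ) < Fintype.card V := by omega
  obtain ⟨v⟩ := Fintype.card_pos_iff.mp this
  have hle : (G.degree v : ℝ) ≤ (Fintype.card V : ℝ) - 1 := by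
    have h1 : G.degree v + 1 ≤ Fintype.card V := G.degree_lt_card_verts v
    have h2 : (G.degree v : ℝ) + 1 ≤ (Fintype.card V : ℝ) := by exact_mod_cast h1
    linarith
  have := hdeg v
  linarith
end

section
/- Let s, t > 0 be real numbers, let G = (V, E) be a finite simple graph with V nonempty, and let T := ‖V‖ − (s + t + 1)·|V|. Suppose T ≥ 0 and the minimum degree of G satisfies δ(G) > s + t + 1 + T. Then T < s + t + 2. -/
open Finset

lemma edgesIn_univ_eq {V : Type*} [Fintype V] (G : SimpleGraph V) [DecidableRel G.Adj] :
    G.edgesIn Finset.univ = G.edgeFinset.card := by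
  unfold SimpleGraph.edgesIn
  have : {e ∈ G.edgeSet | ∀ v ∈ e, v ∈ (Finset.univ : Finset V)} = G.edgeSet := by
    ext e; simp
  rw [this, Set.ncard_eq_toFinset_card', SimpleGraph.edgeFinset]

/-- If `T = ‖V‖ - (s+t+1)|V| ≥ 0` and the minimum degree satisfies
`δ(G) > s + t + 1 + T`, then `T < s + t + 2`. -/
theorem T_lt_of_minDegree {V : Type*} [Fintype V] [Nonempty V]
    (G : SimpleGraph V) [DecidableRel G.Adj] (s t : ℝ) (hs : 0 < s) (ht : 0 < t)
    (hT : 0 ≤ (G.edgesIn Finset.univ : ℝ) - (s + t + 1) * Fintype.card V)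
    (hdeg : s + t + 1 + ((G.edgesIn Finset.univ : ℝ) - (s + t + 1) * Fintype.card V) <
      (G.minDegree : ℝ)) :
    (G.edgesIn Finset.univ : ℝ) - (s + t + 1) * Fintype.card V < s + t + 2 := by
  classical
  have hE : G.edgesIn Finset.univ = G.edgeFinset.card := edgesIn_univ_eq G
  -- sum of degrees
  have hsum : Fintype.card V * G.minDegree ≤ 2 * G.edgeFinset.card := by
    rw [← G.sum_degrees_eq_twice_card_edges]
    calc Fintype.card V * G.minDegree = ∑ _v : V, G.minDegree := by
          simp [Finset.sum_const, mul_comm]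
      _ ≤ ∑ v, G.degree v := Finset.sum_le_sum fun v _ => G.minDegree_le_degree v
  have hlt : G.minDegree < Fintype.card V := by
    obtain ⟨v⟩ := (inferInstance : Nonempty V)
    exact lt_of_le_of_lt (G.minDegree_le_degree v) (G.degree_lt_card_verts v)
  -- pass to reals
  have hsumR : (Fintype.card V : ℝ) * G.minDegree ≤ 2 * G.edgeFinset.card := by
    exact_mod_cast hsum
  have hltR : (G.minDegree : ℝ) + 1 ≤ Fintype.card V := by exact_mod_cast hlt
  rw [hE] at hT hdeg ⊢
  set n : ℝ := (Fintype.card V : ℝ)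
  set E : ℝ := (G.edgeFinset.card : ℝ)
  set d : ℝ := (G.minDegree : ℝ)
  set a : ℝ := s + t + 1 with ha
  set T : ℝ := E - a * n with hTdef
  by_contra hcon
  push_neg at hcon
  have h1 : T - a ≥ 1 := by simp only [ha] at hcon ⊢; linarith
  have h2 : n > T + a + 1 := by linarith
  have h3 : n * d ≤ 2 * T + 2 * a * n := by
    have : 2 * E = 2 * T + 2 * a * n := by rw [hTdef]; ring
    linarith
  -- n * (T - a) ≤ 2 * T  (from  n*(a+T) < n*d ≤ 2T + 2an)
  have hn0 : 0 < n := by linarith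
  have h4 : n * (T - a) < 2 * T := by nlinarith
  nlinarith [mul_le_mul_of_nonneg_right (le_of_lt h2) (by linarith : (0:ℝ) ≤ T - a)]
end

section
/- Let s, t > 0 be real numbers with p := (s+1)/(s+t+2) and p̄ := (t+1)/(s+t+2), and let G = (V, E) be a finite simple graph whose minimum degree satisfies δ(G) > s + t + 1. Then for every x ∈ [0,1]^V the identity f₁(x) − g₁(x) = Σ_{v ∈ V} ( x_v·(d(v) − (s+t+1)) + (s+t+1)·p̄ ) − |E| holds, and consequently f₁ − g₁ is coordinatewise increasing on [0,1]^V: whenever x, y ∈ [0,1]^V satisfy x_v ≤ y_v for all v ∈ V, then f₁(x) − g₁(x) ≤ f₁(y) − g₁(y), with strict inequality if x ≠ y. -/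
open Finset

lemma sum_edges_add {V : Type*} [Fintype V] [DecidableEq V] (G : SimpleGraph V)
    [DecidableRel G.Adj] (x : V → ℝ) :
    ∑ e ∈ G.edgeFinset, Sym2.lift ⟨fun u v => x u + x v, fun _ _ => add_comm _ _⟩ e
      = ∑ v, (G.degree v : ℝ) * x v := by
  have h1 : ∑ d : G.Dart, x d.fst
      = ∑ e ∈ G.edgeFinset,
          ∑ d ∈ Finset.univ.filter (fun d : G.Dart => d.edge = e), x d.fst := by
    exact (Finset.sum_fiberwise_of_maps_to
      (fun d _ => by rw [SimpleGraph.mem_edgeFinset]; exact d.edge_mem) _).symm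
  have h2 : ∀ e ∈ G.edgeFinset,
      ∑ d ∈ Finset.univ.filter (fun d : G.Dart => d.edge = e), x d.fst
        = Sym2.lift ⟨fun u v => x u + x v, fun _ _ => add_comm _ _⟩ e := by
    intro e he
    rw [SimpleGraph.mem_edgeFinset] at he
    induction' e with v w
    have hadj : G.Adj v w := he
    let d : G.Dart := ⟨(v, w), hadj⟩
    have hfib : (Finset.univ.filter (fun d' : G.Dart => d'.edge = d.edge)) = {d, d.symm} :=
      d.edge_fiber
    have hde : d.edge = s(v, w) := rfl
    rw [← hde, hfib, Finset.sum_pair d.symm_ne.symm]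
    simp [d, SimpleGraph.Dart.symm]
  have h3 : ∑ d : G.Dart, x d.fst = ∑ v, (G.degree v : ℝ) * x v := by
    rw [← Finset.sum_fiberwise_of_maps_to (fun (d : G.Dart) _ =>
      Finset.mem_univ d.fst) (fun d => x d.fst)]
    refine Finset.sum_congr rfl fun v _ => ?_
    have : ∀ d ∈ Finset.univ.filter (fun d : G.Dart => d.fst = v), x d.fst = x v := by
      intro d hd
      rw [Finset.mem_filter] at hd
      rw [hd.2]
    rw [Finset.sum_congr rfl this, Finset.sum_const, nsmul_eq_mul]
    congr 1
    exact_mod_cast G.dart_fst_fiber_card_eq_degree v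
  rw [Finset.sum_congr rfl h2] at h1
  rw [← h1, h3]

/-- `f₁(x) = Σ_{uv ∈ E} x_u x_v - (s+t+1) p Σ_{v ∈ V} x_v` where `p = (s+1)/(s+t+2)`,
each edge counted once. -/
noncomputable def SimpleGraph.f1 {V : Type*} [Fintype V] (G : SimpleGraph V)
    (s t : ℝ) (x : V → ℝ) : ℝ :=
  letI := Classical.decEq V
  letI : DecidableRel G.Adj := Classical.decRel _
  (∑ e ∈ G.edgeFinset, Sym2.lift ⟨fun u v => x u * x v, fun _ _ => mul_comm _ _⟩ e)
    - (s + t + 1) * ((s + 1) / (s + t + 2)) * ∑ v, x v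

/-- `g₁(x) = Σ_{uv ∈ E} (1-x_u)(1-x_v) - (s+t+1) p̄ Σ_{v ∈ V} (1-x_v)` where
`p̄ = (t+1)/(s+t+2)`, each edge counted once. -/
noncomputable def SimpleGraph.g1 {V : Type*} [Fintype V] (G : SimpleGraph V)
    (s t : ℝ) (x : V → ℝ) : ℝ :=
  letI := Classical.decEq V
  letI : DecidableRel G.Adj := Classical.decRel _
  (∑ e ∈ G.edgeFinset,
      Sym2.lift ⟨fun u v => (1 - x u) * (1 - x v), fun _ _ => mul_comm _ _⟩ e)
    - (s + t + 1) * ((t + 1) / (s + t + 2)) * ∑ v, (1 - x v)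

/-- If `δ(G) > s + t + 1`, then on `[0,1]^V` the identity
`f₁(x) - g₁(x) = Σ_v (x_v (d(v) - (s+t+1)) + (s+t+1) p̄) - |E|` holds, and `f₁ - g₁` is
coordinatewise increasing, strictly so for distinct comparable points. -/
theorem f1_sub_g1_increasing {V : Type*} [Fintype V] [DecidableEq V] [Nonempty V]
    (G : SimpleGraph V) [DecidableRel G.Adj] (s t : ℝ) (hs : 0 < s) (ht : 0 < t)
    (hdeg : s + t + 1 < (G.minDegree : ℝ)) :
    (∀ x : V → ℝ, (∀ v, x v ∈ Set.Icc (0 : ℝ) 1) →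
      G.f1 s t x - G.g1 s t x =
        (∑ v, (x v * ((G.degree v : ℝ) - (s + t + 1)) +
          (s + t + 1) * ((t + 1) / (s + t + 2)))) - (G.edgeFinset.card : ℝ)) ∧
    (∀ x y : V → ℝ, (∀ v, x v ∈ Set.Icc (0 : ℝ) 1) → (∀ v, y v ∈ Set.Icc (0 : ℝ) 1) →
      (∀ v, x v ≤ y v) →
      G.f1 s t x - G.g1 s t x ≤ G.f1 s t y - G.g1 s t y ∧
      (x ≠ y → G.f1 s t x - G.g1 s t x < G.f1 s t y - G.g1 s t y)) := by
  have hst : s + t + 2 ≠ 0 := by positivity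
  -- rewrite f1, g1 with the ambient instances
  have hf1 : ∀ x : V → ℝ, G.f1 s t x =
      (∑ e ∈ G.edgeFinset, Sym2.lift ⟨fun u v => x u * x v, fun _ _ => mul_comm _ _⟩ e)
        - (s + t + 1) * ((s + 1) / (s + t + 2)) * ∑ v, x v := by
    intro x
    unfold SimpleGraph.f1
    congr!
  have hg1 : ∀ x : V → ℝ, G.g1 s t x =
      (∑ e ∈ G.edgeFinset,
          Sym2.lift ⟨fun u v => (1 - x u) * (1 - x v), fun _ _ => mul_comm _ _⟩ e)
        - (s + t + 1) * ((t + 1) / (s + t + 2)) * ∑ v, (1 - x v) := by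
    intro x
    unfold SimpleGraph.g1
    congr!
  -- per-edge identity summed over edges
  have hedge : ∀ x : V → ℝ,
      (∑ e ∈ G.edgeFinset, Sym2.lift ⟨fun u v => x u * x v, fun _ _ => mul_comm _ _⟩ e)
        - (∑ e ∈ G.edgeFinset,
            Sym2.lift ⟨fun u v => (1 - x u) * (1 - x v), fun _ _ => mul_comm _ _⟩ e)
      = (∑ v, (G.degree v : ℝ) * x v) - (G.edgeFinset.card : ℝ) := by
    intro x
    rw [← Finset.sum_sub_distrib]
    have : ∀ e ∈ G.edgeFinset,
        Sym2.lift ⟨fun u v => x u * x v, fun _ _ => mul_comm _ _⟩ e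
          - Sym2.lift ⟨fun u v => (1 - x u) * (1 - x v), fun _ _ => mul_comm _ _⟩ e
        = Sym2.lift ⟨fun u v => x u + x v, fun _ _ => add_comm _ _⟩ e - 1 := by
      intro e _
      induction' e with u v
      simp only [Sym2.lift_mk]
      ring
    rw [Finset.sum_congr rfl this, Finset.sum_sub_distrib, sum_edges_add,
      Finset.sum_const, nsmul_eq_mul, mul_one]
  -- the identity
  have key : ∀ x : V → ℝ,
      G.f1 s t x - G.g1 s t x =
        (∑ v, (x v * ((G.degree v : ℝ) - (s + t + 1)) +
          (s + t + 1) * ((t + 1) / (s + t + 2)))) - (G.edgeFinset.card : ℝ) := by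
    intro x
    rw [hf1, hg1]
    have h1 : ∑ v, ((1 : ℝ) - x v) = (Fintype.card V : ℝ) - ∑ v, x v := by
      rw [Finset.sum_sub_distrib, Finset.sum_const, nsmul_eq_mul, mul_one, Finset.card_univ]
    have h2 : ∑ v, (x v * ((G.degree v : ℝ) - (s + t + 1)) +
          (s + t + 1) * ((t + 1) / (s + t + 2)))
        = (∑ v, (G.degree v : ℝ) * x v) - (s + t + 1) * ∑ v, x v
          + (Fintype.card V : ℝ) * ((s + t + 1) * ((t + 1) / (s + t + 2))) := by
      rw [Finset.sum_add_distrib, Finset.sum_const, nsmul_eq_mul, Finset.card_univ]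
      congr 1
      rw [Finset.mul_sum, ← Finset.sum_sub_distrib]
      refine Finset.sum_congr rfl fun v _ => ?_
      ring
    have h3 := hedge x
    have expand : ((∑ e ∈ G.edgeFinset,
          Sym2.lift ⟨fun u v => x u * x v, fun _ _ => mul_comm _ _⟩ e)
        - (s + t + 1) * ((s + 1) / (s + t + 2)) * ∑ v, x v)
        - ((∑ e ∈ G.edgeFinset,
            Sym2.lift ⟨fun u v => (1 - x u) * (1 - x v), fun _ _ => mul_comm _ _⟩ e)
          - (s + t + 1) * ((t + 1) / (s + t + 2)) * ∑ v, (1 - x v))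
        = ((∑ v, (G.degree v : ℝ) * x v) - (G.edgeFinset.card : ℝ))
          - (s + t + 1) * ((s + 1) / (s + t + 2)) * ∑ v, x v
          + (s + t + 1) * ((t + 1) / (s + t + 2)) * ((Fintype.card V : ℝ) - ∑ v, x v) := by
      rw [← h3, h1]; ring
    rw [expand, h2]
    field_simp
    ring
  refine ⟨fun x _ => key x, fun x y _ _ hxy => ?_⟩
  have hc : ∀ v, (0 : ℝ) < (G.degree v : ℝ) - (s + t + 1) := by
    intro v
    have := G.minDegree_le_degree v
    have : (G.minDegree : ℝ) ≤ (G.degree v : ℝ) := by exact_mod_cast this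
    linarith
  have hterm : ∀ v ∈ Finset.univ, (x v * ((G.degree v : ℝ) - (s + t + 1)) +
        (s + t + 1) * ((t + 1) / (s + t + 2)))
      ≤ (y v * ((G.degree v : ℝ) - (s + t + 1)) +
        (s + t + 1) * ((t + 1) / (s + t + 2))) := by
    intro v _
    have := mul_le_mul_of_nonneg_right (hxy v) (le_of_lt (hc v))
    linarith
  constructor
  · rw [key x, key y]
    have := Finset.sum_le_sum hterm
    linarith
  · intro hne
    rw [key x, key y]
    obtain ⟨v, hv⟩ : ∃ v, x v ≠ y v := by
      by_contra h
      push_neg at h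
      exact hne (funext h)
    have hvlt : x v < y v := lt_of_le_of_ne (hxy v) hv
    have hstrict : ∑ v, (x v * ((G.degree v : ℝ) - (s + t + 1)) +
          (s + t + 1) * ((t + 1) / (s + t + 2)))
        < ∑ v, (y v * ((G.degree v : ℝ) - (s + t + 1)) +
          (s + t + 1) * ((t + 1) / (s + t + 2))) := by
      refine Finset.sum_lt_sum hterm ⟨v, Finset.mem_univ v, ?_⟩
      have := mul_lt_mul_of_pos_right hvlt (hc v)
      linarith
    linarith
end

section
/- Let s, t be real numbers with s, t > 1/2, p := (s+1)/(s+t+2), p̄ := (t+1)/(s+t+2). Let T and n be reals with 0 ≤ T ≤ s + t + 2 and n ≥ s + t + 2 + T, and let S be a real with S ≥ 2(s+t+1)·p and n − S ≥ 2(s+t+1)·p̄. Define X := p²·T − p(1−p)·T/(2s+2t+4), Y := p̄²·T − p(1−p)·T/(2s+2t+4), A := S − (s+t+1)·p − 1/2, and B := (n − S) − (s+t+1)·p̄ − 1/2. Then: X ≥ 0; Y ≥ 0; A ≥ (s+t+1)·p − 1/2 > 0; B ≥ (s+t+1)·p̄ − 1/2 > 0; A + B = n − (s+t+2) ≥ T;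 and X + Y + A·p̄ + B·p ≥ T − 7/12. -/
set_option maxHeartbeats 1000000

private lemma aux_case0 (s t p T n S X Y : ℝ)
    (hs : 1 / 2 < s) (ht : 1 / 2 < t)
    (hT0 : 0 ≤ T) (hn : s + t + 2 + T ≤ n)
    (hp0 : 0 < p) (hp1 : p < 1)
    (hXv : X * (2 * s + 2 * t + 4) = p ^ 2 * T * (2 * s + 2 * t + 4) - p * (1 - p) * T)
    (hYv : Y * (2 * s + 2 * t + 4) = (1 - p) ^ 2 * T * (2 * s + 2 * t + 4) - p * (1 - p) * T)
    (hα : 0 ≤ S - 2 * (s + t + 1) * p)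
    (hβ : 0 ≤ (n - S) - 2 * (s + t + 1) * (1 - p))
    (hc : T ≤ s + t) :
    (T - 7 / 12) * (2 * s + 2 * t + 4) ≤
      (X + Y + (S - (s + t + 1) * p - 1 / 2) * (1 - p)
        + ((n - S) - (s + t + 1) * (1 - p) - 1 / 2) * p) * (2 * s + 2 * t + 4) := by
  have hD : (0:ℝ) < s + t + 2 := by linarith
  nlinarith [hXv, hYv,
    mul_nonneg (mul_nonneg (mul_nonneg hp0.le (show (0:ℝ) ≤ 1 - p by linarith))
      (show (0:ℝ) ≤ 2 * (s + t + 2) + 1 by linarith)) (show (0:ℝ) ≤ s + t - T by linarith),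
    mul_nonneg (mul_nonneg hp0.le (show (0:ℝ) ≤ 1 - p by linarith))
      (show (0:ℝ) ≤ s + t + 4 by linarith),
    mul_nonneg hD.le (mul_nonneg hα (show (0:ℝ) ≤ 1 - p by linarith)),
    mul_nonneg hD.le (mul_nonneg hβ hp0.le)]

private lemma aux_case1 (s t p T n S X Y : ℝ)
    (hs : 1 / 2 < s) (ht : 1 / 2 < t)
    (hT1 : T ≤ s + t + 2) (hn : s + t + 2 + T ≤ n)
    (hp0 : 0 < p) (hp1 : p < 1)
    (hXv : X * (2 * s + 2 * t + 4) = p ^ 2 * T * (2 * s + 2 * t + 4) - p * (1 - p) * T)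
    (hYv : Y * (2 * s + 2 * t + 4) = (1 - p) ^ 2 * T * (2 * s + 2 * t + 4) - p * (1 - p) * T)
    (hα : 0 ≤ S - 2 * (s + t + 1) * p)
    (hβ : 0 ≤ (n - S) - 2 * (s + t + 1) * (1 - p))
    (hc : s + t < T) (hph : p ≤ 1 / 2) :
    (T - 7 / 12) * (2 * s + 2 * t + 4) ≤
      (X + Y + (S - (s + t + 1) * p - 1 / 2) * (1 - p)
        + ((n - S) - (s + t + 1) * (1 - p) - 1 / 2) * p) * (2 * s + 2 * t + 4) := by
  have hD : (0:ℝ) < s + t + 2 := by linarith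
  have hnT : 0 ≤ n - s - t - 2 - T := by linarith
  nlinarith [hXv, hYv,
    mul_nonneg (show (0:ℝ) ≤ s + t + 2 - T by linarith)
      (show (0:ℝ) ≤ 2 * (p * (1 - p)) * (s + t + 4) + (s + t + 2) / 6 by
        nlinarith [mul_nonneg (mul_nonneg hp0.le (show (0:ℝ) ≤ 1 - p by linarith))
          (show (0:ℝ) ≤ s + t + 4 by linarith)]),
    mul_nonneg (mul_nonneg (show (0:ℝ) ≤ T - s - t by linarith) hD.le) (sq_nonneg (6 * p - 1)),
    mul_nonneg hD.le (mul_nonneg hα (show (0:ℝ) ≤ 1 - 2 * p by linarith)),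
    mul_nonneg hD.le (mul_nonneg hp0.le hnT)]

private lemma aux_case2 (s t p T n S X Y : ℝ)
    (hs : 1 / 2 < s) (ht : 1 / 2 < t)
    (hT1 : T ≤ s + t + 2) (hn : s + t + 2 + T ≤ n)
    (hp0 : 0 < p) (hp1 : p < 1)
    (hXv : X * (2 * s + 2 * t + 4) = p ^ 2 * T * (2 * s + 2 * t + 4) - p * (1 - p) * T)
    (hYv : Y * (2 * s + 2 * t + 4) = (1 - p) ^ 2 * T * (2 * s + 2 * t + 4) - p * (1 - p) * T)
    (hα : 0 ≤ S - 2 * (s + t + 1) * p)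
    (hβ : 0 ≤ (n - S) - 2 * (s + t + 1) * (1 - p))
    (hc : s + t < T) (hph : 1 / 2 < p) :
    (T - 7 / 12) * (2 * s + 2 * t + 4) ≤
      (X + Y + (S - (s + t + 1) * p - 1 / 2) * (1 - p)
        + ((n - S) - (s + t + 1) * (1 - p) - 1 / 2) * p) * (2 * s + 2 * t + 4) := by
  have hD : (0:ℝ) < s + t + 2 := by linarith
  have hnT : 0 ≤ n - s - t - 2 - T := by linarith
  nlinarith [hXv, hYv,
    mul_nonneg (show (0:ℝ) ≤ s + t + 2 - T by linarith)
      (show (0:ℝ) ≤ 2 * (p * (1 - p)) * (s + t + 4) + (s + t + 2) / 6 by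
        nlinarith [mul_nonneg (mul_nonneg hp0.le (show (0:ℝ) ≤ 1 - p by linarith))
          (show (0:ℝ) ≤ s + t + 4 by linarith)]),
    mul_nonneg (mul_nonneg (show (0:ℝ) ≤ T - s - t by linarith) hD.le) (sq_nonneg (6 * p - 5)),
    mul_nonneg hD.le (mul_nonneg hβ (show (0:ℝ) ≤ 2 * p - 1 by linarith)),
    mul_nonneg hD.le (mul_nonneg (show (0:ℝ) ≤ 1 - p by linarith) hnT)]

private lemma aux_pos (s t p : ℝ) (hs : 1 / 2 < s) (ht : 1 / 2 < t)
    (hpD : p * (s + t + 2) = s + 1) : 0 < (s + t + 1) * p - 1 / 2 := by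
  have hD : (0:ℝ) < s + t + 2 := by linarith
  nlinarith [hpD, hD, mul_pos hD hD]

private lemma aux_X0 (s t p pb T X : ℝ) (hs : 1 / 2 < s) (ht : 1 / 2 < t)
    (hT0 : 0 ≤ T) (hp0 : 0 < p) (hsum : p + pb = 1)
    (hpD : p * (s + t + 2) = s + 1)
    (hXv : X * (2 * s + 2 * t + 4) = p ^ 2 * T * (2 * s + 2 * t + 4) - p * (1 - p) * T) :
    0 ≤ X := by
  have h2D : (0:ℝ) < 2 * s + 2 * t + 4 := by linarith
  have hkey : (0:ℝ) ≤ p * (2 * s + 2 * t + 4) - pb := by linarith [hpD]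
  have hz : p * (1 - p) * T = p * pb * T := by rw [show (1:ℝ) - p = pb by linarith]
  have h : 0 * (2 * s + 2 * t + 4) ≤ X * (2 * s + 2 * t + 4) := by
    rw [hXv, hz]
    nlinarith [mul_nonneg (mul_nonneg hp0.le hT0) hkey]
  exact le_of_mul_le_mul_right h h2D

/-- Arithmetic estimates for the quantities `X`, `Y`, `A`, `B` built from `s, t > 1/2`,
`p = (s+1)/(s+t+2)`, `p̄ = (t+1)/(s+t+2)`, `0 ≤ T ≤ s+t+2`, `n ≥ s+t+2+T`,
`S ≥ 2(s+t+1)p` and `n - S ≥ 2(s+t+1)p̄`: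
`X, Y ≥ 0`; `A ≥ (s+t+1)p - 1/2 > 0`; `B ≥ (s+t+1)p̄ - 1/2 > 0`;
`A + B = n - (s+t+2) ≥ T`; and `X + Y + A p̄ + B p ≥ T - 7/12`. -/
theorem arithmetic_bounds (s t p pb T n S X Y A B : ℝ)
    (hs : 1 / 2 < s) (ht : 1 / 2 < t)
    (hp : p = (s + 1) / (s + t + 2)) (hpb : pb = (t + 1) / (s + t + 2))
    (hT0 : 0 ≤ T) (hT1 : T ≤ s + t + 2)
    (hn : s + t + 2 + T ≤ n)
    (hS1 : 2 * (s + t + 1) * p ≤ S) (hS2 : 2 * (s + t + 1) * pb ≤ n - S)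
    (hX : X = p ^ 2 * T - p * (1 - p) * T / (2 * s + 2 * t + 4))
    (hY : Y = pb ^ 2 * T - p * (1 - p) * T / (2 * s + 2 * t + 4))
    (hA : A = S - (s + t + 1) * p - 1 / 2)
    (hB : B = (n - S) - (s + t + 1) * pb - 1 / 2) :
    0 ≤ X ∧ 0 ≤ Y ∧
    ((s + t + 1) * p - 1 / 2 ≤ A ∧ 0 < (s + t + 1) * p - 1 / 2) ∧
    ((s + t + 1) * pb - 1 / 2 ≤ B ∧ 0 < (s + t + 1) * pb - 1 / 2) ∧
    (A + B = n - (s + t + 2) ∧ T ≤ A + B) ∧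
    T - 7 / 12 ≤ X + Y + A * pb + B * p := by
  have hD : (0:ℝ) < s + t + 2 := by linarith
  have hD0 : (s:ℝ) + t + 2 ≠ 0 := ne_of_gt hD
  have hpD : p * (s + t + 2) = s + 1 := by rw [hp]; field_simp
  have hpbD : pb * (s + t + 2) = t + 1 := by rw [hpb]; field_simp
  have hsum : p + pb = 1 := by
    rw [hp, hpb, ← add_div, div_eq_one_iff_eq hD0]; ring
  have hp0 : 0 < p := by rw [hp]; exact div_pos (by linarith) hD
  have hpb0 : 0 < pb := by rw [hpb]; exact div_pos (by linarith) hD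
  have hp1 : p < 1 := by linarith
  have h2D : (0:ℝ) < 2 * s + 2 * t + 4 := by linarith
  have hXv : X * (2 * s + 2 * t + 4) = p ^ 2 * T * (2 * s + 2 * t + 4) - p * (1 - p) * T := by
    rw [hX]; field_simp
  have hYv : Y * (2 * s + 2 * t + 4) = pb ^ 2 * T * (2 * s + 2 * t + 4) - p * (1 - p) * T := by
    rw [hY]; field_simp
  have hX0 : 0 ≤ X := aux_X0 s t p pb T X hs ht hT0 hp0 hsum hpD hXv
  have hYv2 : Y * (2 * t + 2 * s + 4) = pb ^ 2 * T * (2 * t + 2 * s + 4) - pb * (1 - pb) * T := by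
    have h1p : (1:ℝ) - p = pb := by linarith
    have h1pb : (1:ℝ) - pb = p := by linarith
    rw [h1pb]
    calc Y * (2 * t + 2 * s + 4) = Y * (2 * s + 2 * t + 4) := by ring
    _ = pb ^ 2 * T * (2 * s + 2 * t + 4) - p * (1 - p) * T := hYv
    _ = pb ^ 2 * T * (2 * t + 2 * s + 4) - pb * p * T := by rw [h1p]; ring
  have hsum2 : pb + p = 1 := by linarith
  have hY0 : 0 ≤ Y := aux_X0 t s pb p T Y ht hs hT0 hpb0 hsum2
    (by linarith [hpbD]) hYv2
  have hApos : 0 < (s + t + 1) * p - 1 / 2 := aux_pos s t p hs ht hpD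
  have hBpos : 0 < (s + t + 1) * pb - 1 / 2 := by
    have := aux_pos t s pb ht hs (by linarith [hpbD])
    linarith
  have hAge : (s + t + 1) * p - 1 / 2 ≤ A := by rw [hA]; linarith
  have hBge : (s + t + 1) * pb - 1 / 2 ≤ B := by rw [hB]; linarith
  have hABsum : A + B = n - (s + t + 2) := by
    rw [hA, hB]
    have h1 : (s + t + 1) * p + (s + t + 1) * pb = s + t + 1 := by
      rw [← mul_add, hsum, mul_one]
    linarith
  have hABT : T ≤ A + B := by rw [hABsum]; linarith
  have hpb' : pb = 1 - p := by linarith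
  subst hpb'
  have hα : 0 ≤ S - 2 * (s + t + 1) * p := by linarith
  have hβ : 0 ≤ (n - S) - 2 * (s + t + 1) * (1 - p) := by linarith
  have hfin : T - 7 / 12 ≤ X + Y + A * (1 - p) + B * p := by
    have key : (T - 7 / 12) * (2 * s + 2 * t + 4) ≤
        (X + Y + A * (1 - p) + B * p) * (2 * s + 2 * t + 4) := by
      rw [hA, hB]
      rcases le_or_gt T (s + t) with hc | hc
      · exact aux_case0 s t p T n S X Y hs ht hT0 hn hp0 hp1 hXv hYv hα hβ hc
      · rcases le_or_gt p (1 / 2) with hph | hph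
        · exact aux_case1 s t p T n S X Y hs ht hT1 hn hp0 hp1 hXv hYv hα hβ hc hph
        · exact aux_case2 s t p T n S X Y hs ht hT1 hn hp0 hp1 hXv hYv hα hβ hc hph
    linarith [le_of_mul_le_mul_right key h2D]
  exact ⟨hX0, hY0, ⟨hAge, hApos⟩, ⟨hBge, hBpos⟩, ⟨hABsum, hABT⟩, hfin⟩
end

section
/- Let s, t be positive integers and n an integer with n ≥ s + t + 2. Let H = (V, E) be the graph on n vertices obtained as the complete join of a clique X of size s + t + 1 with an independent set Y of size n − (s + t + 1); that is, V = X ∪ Y with X, Y disjoint, and uv ∈ E if and only if u ∈ X or v ∈ X (and u ≠ v). Then ‖V‖ = (s+t+1)(s+t)/2 + (n − s − t − 1)(s + t + 1), and there is no partition (V₁, V₂) of V with V₁, V₂ both nonempty such that ‖V₁‖ ≥ s·|V₁| and ‖V₂‖ ≥ t·|V₂|. -/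
open Finset

lemma edgesIn_formula {V : Type*} [Fintype V] [DecidableEq V] (H : SimpleGraph V) (X : Finset V)
    (hadj : ∀ u v : V, H.Adj u v ↔ u ≠ v ∧ (u ∈ X ∨ v ∈ X)) (A : Finset V) :
    2 * H.edgesIn A + (A ∩ X).card
      = (A ∩ X).card * (A ∩ X).card + 2 * ((A ∩ X).card * (A \ X).card) := by
  classical
  let G' : SimpleGraph V :=
    { Adj := fun u v => u ≠ v ∧ (u ∈ X ∨ v ∈ X) ∧ u ∈ A ∧ v ∈ A
      symm := by
        constructor
        intro u v h
        exact ⟨h.1.symm, h.2.1.symm, h.2.2.2, h.2.2.1⟩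
      loopless := ⟨fun v h => h.1 rfl⟩ }
  haveI : DecidableRel G'.Adj := fun u v => inferInstanceAs (Decidable (_ ∧ _))
  have hset : {e ∈ H.edgeSet | ∀ v ∈ e, v ∈ A} = G'.edgeSet := by
    ext e
    induction e using Sym2.ind with
    | _ x y =>
      simp only [Set.mem_setOf_eq, SimpleGraph.mem_edgeSet, hadj, Sym2.mem_iff, G']
      constructor
      · rintro ⟨⟨hne, hX⟩, hA⟩
        exact ⟨hne, hX, hA x (Or.inl rfl), hA y (Or.inr rfl)⟩
      · rintro ⟨hne, hX, hx, hy⟩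
        exact ⟨⟨hne, hX⟩, by rintro v (rfl | rfl) <;> assumption⟩
  have hcard : H.edgesIn A = G'.edgeFinset.card := by
    rw [SimpleGraph.edgesIn, hset, SimpleGraph.edgeFinset, Set.ncard_eq_toFinset_card']
  have hsum := SimpleGraph.sum_degrees_eq_twice_card_edges G'
  have hdeg1 : ∀ v ∈ A ∩ X, G'.degree v = A.card - 1 := by
    intro v hv
    rw [Finset.mem_inter] at hv
    rw [SimpleGraph.degree, show G'.neighborFinset v = A.erase v from ?_,
      Finset.card_erase_of_mem hv.1]
    ext u
    simp only [SimpleGraph.mem_neighborFinset, Finset.mem_erase, G']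
    constructor
    · rintro ⟨hne, _, _, hu⟩; exact ⟨hne.symm, hu⟩
    · rintro ⟨hne, hu⟩; exact ⟨hne.symm, Or.inl hv.2, hv.1, hu⟩
  have hdeg2 : ∀ v ∈ A \ X, G'.degree v = (A ∩ X).card := by
    intro v hv
    rw [Finset.mem_sdiff] at hv
    rw [SimpleGraph.degree, show G'.neighborFinset v = A ∩ X from ?_]
    ext u
    simp only [SimpleGraph.mem_neighborFinset, Finset.mem_inter, G']
    constructor
    · rintro ⟨hne, hor, _, hu⟩
      exact ⟨hu, hor.resolve_left hv.2⟩
    · rintro ⟨hu, huX⟩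
      exact ⟨fun h => hv.2 (h ▸ huX), Or.inr huX, hv.1, hu⟩
  have hdeg0 : ∀ v ∈ Finset.univ, v ∉ A → G'.degree v = 0 := by
    intro v _ hv
    rw [SimpleGraph.degree, Finset.card_eq_zero]
    ext u
    simp only [SimpleGraph.mem_neighborFinset, Finset.notMem_empty, iff_false, G']
    rintro ⟨_, _, hvA, _⟩
    exact hv hvA
  have hA : (A ∩ X) ∪ (A \ X) = A := by
    rw [Finset.union_comm, Finset.sdiff_union_inter]
  have hdisj : Disjoint (A ∩ X) (A \ X) := by
    rw [Finset.disjoint_left]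
    intro x hx hx'
    exact (Finset.mem_sdiff.1 hx').2 (Finset.mem_inter.1 hx).2
  have hsplit : ∑ v, G'.degree v
      = (A ∩ X).card * (A.card - 1) + (A \ X).card * (A ∩ X).card := by
    rw [← Finset.sum_subset (Finset.subset_univ A) (by intro v hv h; exact hdeg0 v hv h)]
    nth_rewrite 1 [← hA]
    rw [Finset.sum_union hdisj, Finset.sum_congr rfl hdeg1,
      Finset.sum_congr rfl hdeg2, Finset.sum_const, Finset.sum_const, smul_eq_mul, smul_eq_mul]
  have hAcard : (A ∩ X).card + (A \ X).card = A.card := Finset.card_inter_add_card_sdiff A X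
  rw [hcard]
  rw [hsplit] at hsum
  -- now arithmetic
  set a := (A ∩ X).card with ha
  set c := (A \ X).card with hc
  set E := G'.edgeFinset.card with hE
  have key : a * (A.card - 1) + c * a = 2 * E := hsum
  rcases Nat.eq_zero_or_pos A.card with h0 | h1
  · have ha0 : a = 0 := by omega
    rw [ha0] at key ⊢
    simp at key ⊢
    omega
  · have hsub : A.card - 1 + 1 = A.card := Nat.succ_pred_eq_of_pos h1
    have : a * (A.card - 1) + a = a * A.card := by
      conv_rhs => rw [← hsub]
      ring
    have hAc : A.card = a + c := hAcard.symm
    nlinarith [key, this, hAc]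

lemma no_good_part {s a y E : ℕ} (hs : 0 < s) (ha : a ≤ s) (hne : 0 < a + y)
    (heq : 2 * E + a = a * a + 2 * (a * y)) (hle : s * (a + y) ≤ E) : False := by
  have h1 : a * a ≤ s * a := Nat.mul_le_mul_right a ha
  have h2 : a * y ≤ s * y := Nat.mul_le_mul_right y ha
  nlinarith [heq, hle, h1, h2]

/-- Sharpness example: the complete join `H` of a clique `X` of size `s+t+1` with an
independent set of size `n - (s+t+1)` has
`‖V‖ = (s+t+1)(s+t)/2 + (n-s-t-1)(s+t+1)`, and admits no partition `(V₁, V₂)` into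
nonempty parts with `‖V₁‖ ≥ s|V₁|` and `‖V₂‖ ≥ t|V₂|`. -/
theorem sharpness_example {V : Type*} [Fintype V] [DecidableEq V] (s t n : ℕ)
    (hs : 0 < s) (ht : 0 < t) (hn : s + t + 2 ≤ n) (hcard : Fintype.card V = n)
    (H : SimpleGraph V) (X : Finset V) (hX : X.card = s + t + 1)
    (hadj : ∀ u v : V, H.Adj u v ↔ u ≠ v ∧ (u ∈ X ∨ v ∈ X)) :
    (H.edgesIn Finset.univ : ℝ) =
      ((s : ℝ) + t + 1) * ((s : ℝ) + t) / 2 + ((n : ℝ) - s - t - 1) * ((s : ℝ) + t + 1) ∧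
    ¬ ∃ V₁ V₂ : Finset V, V₁.Nonempty ∧ V₂.Nonempty ∧ Disjoint V₁ V₂ ∧
      V₁ ∪ V₂ = Finset.univ ∧
      (s : ℝ) * V₁.card ≤ (H.edgesIn V₁ : ℝ) ∧ (t : ℝ) * V₂.card ≤ (H.edgesIn V₂ : ℝ) := by
  constructor
  · have h := edgesIn_formula H X hadj Finset.univ
    rw [Finset.univ_inter, Finset.card_sdiff_of_subset (Finset.subset_univ X), Finset.card_univ,
      hcard, hX] at h
    have hle : s + t + 1 ≤ n := by omega
    have hR : (2 : ℝ) * (H.edgesIn Finset.univ : ℝ) + ((s : ℝ) + t + 1)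
        = ((s : ℝ) + t + 1) * ((s : ℝ) + t + 1)
          + 2 * (((s : ℝ) + t + 1) * ((n : ℝ) - (s + t + 1))) := by
      have := congrArg (fun k : ℕ => (k : ℝ)) h
      push_cast [Nat.cast_sub hle] at this
      -- cast done above
      linarith [this]
    linarith [hR]
  · rintro ⟨V₁, V₂, hne1, hne2, hdisj, hunion, hle1, hle2⟩
    have h1 := edgesIn_formula H X hadj V₁
    have h2 := edgesIn_formula H X hadj V₂
    set a := (V₁ ∩ X).card with ha
    set b := (V₂ ∩ X).card with hb
    set y₁ := (V₁ \ X).card with hy1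
    set y₂ := (V₂ \ X).card with hy2
    have hV1 : a + y₁ = V₁.card := Finset.card_inter_add_card_sdiff V₁ X
    have hV2 : b + y₂ = V₂.card := Finset.card_inter_add_card_sdiff V₂ X
    have hab : a + b = s + t + 1 := by
      have hXsplit : (V₁ ∩ X) ∪ (V₂ ∩ X) = X := by
        rw [← Finset.union_inter_distrib_right, hunion, Finset.univ_inter]
      have hd : Disjoint (V₁ ∩ X) (V₂ ∩ X) :=
        hdisj.mono (Finset.inter_subset_left) (Finset.inter_subset_left)
      rw [← hX, ← hXsplit, Finset.card_union_of_disjoint hd]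
    have hle1' : s * V₁.card ≤ H.edgesIn V₁ := by exact_mod_cast hle1
    have hle2' : t * V₂.card ≤ H.edgesIn V₂ := by exact_mod_cast hle2
    rw [← hV1] at hle1'
    rw [← hV2] at hle2'
    have hne1' : 0 < a + y₁ := by rw [hV1]; exact Finset.card_pos.2 hne1
    have hne2' : 0 < b + y₂ := by rw [hV2]; exact Finset.card_pos.2 hne2
    rcases le_or_gt a s with h | h
    · exact no_good_part hs h hne1' h1 hle1'
    · have hbt : b ≤ t := by omega
      exact no_good_part ht hbt hne2' h2 hle2'
end
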